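/- Let g_ε, g : W → ℝ, for ε > 0, where W ⊂ ℝ² is bounded and open, and suppose there exist κ_ε > 0 with κ_ε → 0, κ_ε > ‖g_ε − g‖_{L^∞(W)}, and ‖D^β(g_ε − g)‖_{L^∞(W)} / κ_ε^{3/2 − |β|} → 0 as ε → 0 for all multi-indices β with |β| ≤ 2. Define ĝ_ε = g_ε − 6κ_ε and h_ε(x̄, x₃) = (g_ε(x̄) − g(x̄)) ((x₃ − ĝ_ε(x̄))/(6κ_ε))³ for ĝ_ε(x̄) < x₃ ≤ g_ε(x̄). Then for every multi-index α with |α| ≤ 2, sup |D^α h_ε| ≤ c Σ_{0 ≤ γ ≤ α} ‖D^γ(g_ε − g)‖_∞ / κ_ε^{|α|−|γ|} for a constant c independent of ε; in particular every second-order derivative of h_ε is o(κ_ε^{−1/2}) as ε → 0. -/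

import Mathlib

open MeasureTheory Filter

/-- Partial derivative of a scalar function on `ℝ³` in direction `i`. -/
noncomputable def pd3 (i : Fin 3) (f : (Fin 3 → ℝ) → ℝ) : (Fin 3 → ℝ) → ℝ :=
  fun x => fderiv ℝ f x (Pi.single i 1)

/-- Iterated partial derivative `D^L` along a list of directions. -/
noncomputable def pdList : List (Fin 3) → ((Fin 3 → ℝ) → ℝ) → ((Fin 3 → ℝ) → ℝ)
  | [], f => f
  | i :: l, f => pd3 i (pdList l f)

/-- Projection of `x ∈ ℝ³` to its first two coordinates `x̄ ∈ ℝ²`. -/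
def proj2 (x : Fin 3 → ℝ) : Fin 2 → ℝ := fun j => x j.castSucc

/-- Embedding of `x̄ ∈ ℝ²` into `ℝ³` with vanishing third coordinate. -/
def lift2 (p : Fin 2 → ℝ) : Fin 3 → ℝ := fun i => if h : (i : ℕ) < 2 then p ⟨i, h⟩ else 0

lemma contDiff_fderiv_apply {E : Type*} [NormedAddCommGroup E] [NormedSpace ℝ E]
    {n : ℕ} {f : E → ℝ} (hf : ContDiff ℝ (n+1 : ℕ) f) (v : E) :
    ContDiff ℝ (n : ℕ) (fun x => fderiv ℝ f x v) := by
  have h1 : ContDiff ℝ (n : ℕ) (fderiv ℝ f) := hf.fderiv_right (by exact_mod_cast le_refl _)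
  exact (ContinuousLinearMap.apply ℝ ℝ v).contDiff.comp h1

lemma pd3_add {f g : (Fin 3 → ℝ) → ℝ} (hf : Differentiable ℝ f) (hg : Differentiable ℝ g)
    (i : Fin 3) : pd3 i (fun x => f x + g x) = fun x => pd3 i f x + pd3 i g x := by
  funext x
  simp only [pd3, fderiv_fun_add (hf x) (hg x)]
  simp

lemma pd3_mul {f g : (Fin 3 → ℝ) → ℝ} (hf : Differentiable ℝ f) (hg : Differentiable ℝ g)
    (i : Fin 3) : pd3 i (fun x => f x * g x) = fun x => f x * pd3 i g x + g x * pd3 i f x := by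
  funext x
  simp only [pd3, fderiv_fun_mul (hf x) (hg x)]
  simp

lemma pd3_mul_const {f : (Fin 3 → ℝ) → ℝ} {c : ℝ} (hf : Differentiable ℝ f) (i : Fin 3) :
    pd3 i (fun x => f x * c) = fun x => pd3 i f x * c := by
  funext x
  simp only [pd3, fderiv_mul_const (hf x)]
  simp only [ContinuousLinearMap.coe_smul', Pi.smul_apply, smul_eq_mul]
  ring

lemma pd3_sub {f g : (Fin 3 → ℝ) → ℝ} (hf : Differentiable ℝ f) (hg : Differentiable ℝ g)
    (i : Fin 3) : pd3 i (fun x => f x - g x) = fun x => pd3 i f x - pd3 i g x := by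
  funext x
  simp only [pd3, fderiv_fun_sub (hf x) (hg x)]
  simp

lemma pd3_sub_const {f : (Fin 3 → ℝ) → ℝ} {c : ℝ} (i : Fin 3) :
    pd3 i (fun x => f x - c) = pd3 i f := by
  funext x
  simp only [pd3, fderiv_sub_const]

lemma pd3_const_sub {f : (Fin 3 → ℝ) → ℝ} {c : ℝ} (i : Fin 3) :
    pd3 i (fun x => c - f x) = fun x => -(pd3 i f x) := by
  funext x
  simp only [pd3, fderiv_const_sub]
  simp

lemma pd3_coord (i : Fin 3) :
    pd3 i (fun x : Fin 3 → ℝ => x 2) = fun _ => if i = 2 then (1:ℝ) else 0 := by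
  funext x
  have : (fun x : Fin 3 → ℝ => x 2) = (ContinuousLinearMap.proj (R := ℝ)
      (φ := fun _ : Fin 3 => ℝ) 2) := rfl
  rw [pd3, this, ContinuousLinearMap.fderiv]
  simp [Pi.single_apply, eq_comm]


noncomputable def P2 : (Fin 3 → ℝ) →L[ℝ] (Fin 2 → ℝ) :=
  ContinuousLinearMap.pi (fun j => ContinuousLinearMap.proj j.castSucc)

lemma P2_apply (x : Fin 3 → ℝ) : P2 x = proj2 x := rfl

lemma proj2_lift2 (p : Fin 2 → ℝ) : proj2 (lift2 p) = p := by
  funext j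
  have hlt : ((j.castSucc : Fin 3) : ℕ) < 2 := by
    simpa using j.isLt
  simp only [proj2, lift2]
  rw [dif_pos hlt]
  congr 1

lemma cyl (L : List (Fin 3)) (n : ℕ) (φ : (Fin 2 → ℝ) → ℝ)
    (hφ : ContDiff ℝ ((L.length + n : ℕ)) φ) :
    ∃ ψ : (Fin 2 → ℝ) → ℝ, ContDiff ℝ (n : ℕ) ψ ∧
      pdList L (fun x => φ (proj2 x)) = fun x => ψ (proj2 x) := by
  induction L generalizing n with
  | nil => exact ⟨φ, by simpa using hφ, rfl⟩
  | cons i L ih =>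
    obtain ⟨ψ, hψ, heq⟩ := ih (n + 1) (by
      have : L.length + (n + 1) = (i :: L).length + n := by simp [List.length_cons]; ring
      rw [this]; exact hφ)
    refine ⟨fun p => fderiv ℝ ψ p (proj2 (Pi.single i 1)),
      contDiff_fderiv_apply hψ _, ?_⟩
    show pd3 i (pdList L fun x => φ (proj2 x)) = _
    rw [heq]
    funext x
    have hd : DifferentiableAt ℝ ψ (P2 x) :=
      (hψ.differentiable (by simp)).differentiableAt
    have hcomp : HasFDerivAt (fun x => ψ (proj2 x)) ((fderiv ℝ ψ (P2 x)).comp P2) x :=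
      (hd.hasFDerivAt.comp x P2.hasFDerivAt)
    simp only [pd3, hcomp.fderiv, ContinuousLinearMap.coe_comp', Function.comp_apply, P2_apply]

lemma cyl_bound {W : Set (Fin 2 → ℝ)} (hWb : Bornology.IsBounded W)
    (L : List (Fin 3)) (hL : L.length ≤ 2) (φ : (Fin 2 → ℝ) → ℝ) (hφ : ContDiff ℝ 2 φ) :
    ∃ C : ℝ, 0 ≤ C ∧ ∀ x : Fin 3 → ℝ, proj2 x ∈ W →
      |pdList L (fun x => φ (proj2 x)) x| ≤ C := by
  obtain ⟨ψ, hψ, heq⟩ := cyl L (2 - L.length) φ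
    (by rw [Nat.add_sub_cancel' hL]; exact_mod_cast hφ)
  have hK : IsCompact (closure W) := hWb.isCompact_closure
  obtain ⟨C, hC⟩ := hK.exists_bound_of_continuousOn (hψ.continuous.continuousOn)
  refine ⟨max C 0, le_max_right _ _, fun x hx => ?_⟩
  rw [heq]
  calc |ψ (proj2 x)| = ‖ψ (proj2 x)‖ := rfl
    _ ≤ C := hC _ (subset_closure hx)
    _ ≤ max C 0 := le_max_left _ _

lemma cyl_le_sup {W : Set (Fin 2 → ℝ)} (hWb : Bornology.IsBounded W)
    (L : List (Fin 3)) (hL : L.length ≤ 2) (φ : (Fin 2 → ℝ) → ℝ) (hφ : ContDiff ℝ 2 φ) :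
    0 ≤ (⨆ p : W, |pdList L (fun x => φ (proj2 x)) (lift2 p)|) ∧
    ∀ x : Fin 3 → ℝ, proj2 x ∈ W →
      |pdList L (fun x => φ (proj2 x)) x| ≤
        ⨆ p : W, |pdList L (fun x => φ (proj2 x)) (lift2 p)| := by
  obtain ⟨C, hC0, hC⟩ := cyl_bound hWb L hL φ hφ
  obtain ⟨ψ, hψ, heq⟩ := cyl L (2 - L.length) φ
    (by rw [Nat.add_sub_cancel' hL]; exact_mod_cast hφ)
  have hbdd : BddAbove (Set.range fun p : W =>
      |pdList L (fun x => φ (proj2 x)) (lift2 p)|) := by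
    refine ⟨C, fun y hy => ?_⟩
    obtain ⟨p, rfl⟩ := hy
    exact hC _ (by rw [proj2_lift2]; exact p.2)
  refine ⟨Real.iSup_nonneg fun p => abs_nonneg _, fun x hx => ?_⟩
  have hinv : pdList L (fun x => φ (proj2 x)) x =
      pdList L (fun x => φ (proj2 x)) (lift2 (proj2 x)) := by
    rw [heq]
    simp only [proj2_lift2]
  rw [hinv]
  exact le_ciSup hbdd (⟨proj2 x, hx⟩ : W)

section deriv

variable {u a : (Fin 3 → ℝ) → ℝ} {k : ℝ}

lemma pd3_contDiff1 {n : ℕ} {f : (Fin 3 → ℝ) → ℝ} (hf : ContDiff ℝ ((n+1 : ℕ)) f) (i : Fin 3) :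
    ContDiff ℝ (n : ℕ) (pd3 i f) := contDiff_fderiv_apply hf _

/-- the cubic profile `q` -/
noncomputable def qfun (a : (Fin 3 → ℝ) → ℝ) (k : ℝ) : (Fin 3 → ℝ) → ℝ :=
  fun x => (x 2 - (a x - k)) / k

lemma qfun_eq : qfun a k = fun x => ((fun x : Fin 3 → ℝ => x 2) x - (fun x => a x - k) x) * k⁻¹ := by
  funext x
  simp [qfun, div_eq_mul_inv]

lemma qfun_contDiff (ha : ContDiff ℝ 2 a) : ContDiff ℝ 2 (qfun a k) := by
  rw [qfun_eq]
  exact (((contDiff_apply ℝ ℝ (2 : Fin 3)).of_le le_top).sub (ha.sub contDiff_const)).mul contDiff_const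

lemma pd3_qfun (ha : ContDiff ℝ 2 a) (i : Fin 3) :
    pd3 i (qfun a k) = fun x => ((if i = 2 then (1:ℝ) else 0) - pd3 i a x) * k⁻¹ := by
  have hda : Differentiable ℝ a := ha.differentiable (by norm_num)
  have h2 : Differentiable ℝ (fun x : Fin 3 → ℝ => x 2) :=
    (contDiff_apply ℝ ℝ (2 : Fin 3) (n := 1)).differentiable (by norm_num)
  rw [qfun_eq, pd3_mul_const (h2.fun_sub (hda.sub_const _)) i,
    pd3_sub h2 (hda.sub_const _) i, pd3_sub_const i, pd3_coord i]

lemma pd3_pd3_qfun (ha : ContDiff ℝ 2 a) (i j : Fin 3) :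
    pd3 i (pd3 j (qfun a k)) = fun x => -(pd3 i (pd3 j a) x) * k⁻¹ := by
  have hpda : Differentiable ℝ (pd3 j a) :=
    (pd3_contDiff1 (n := 1) (by exact_mod_cast ha) j).differentiable (by norm_num)
  rw [pd3_qfun ha j, pd3_mul_const ((differentiable_const _).fun_sub hpda) i,
    pd3_const_sub i]

end deriv

section deriv2

variable {u a : (Fin 3 → ℝ) → ℝ} {k : ℝ}

lemma hh1 (hu : ContDiff ℝ 2 u) (ha : ContDiff ℝ 2 a) (j : Fin 3) :
    pd3 j (fun x => u x * (qfun a k x * (qfun a k x * qfun a k x))) = fun x =>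
      u x * (qfun a k x * qfun a k x * 3 * pd3 j (qfun a k) x) +
      qfun a k x * (qfun a k x * qfun a k x) * pd3 j u x := by
  have dq : Differentiable ℝ (qfun a k) := (qfun_contDiff ha).differentiable (by norm_num)
  have du : Differentiable ℝ u := hu.differentiable (by norm_num)
  rw [pd3_mul du (dq.fun_mul (dq.fun_mul dq)) j, pd3_mul dq (dq.fun_mul dq) j, pd3_mul dq dq j]
  funext x
  ring

lemma hh2 (hu : ContDiff ℝ 2 u) (ha : ContDiff ℝ 2 a) (i j : Fin 3) :
    pd3 i (pd3 j (fun x => u x * (qfun a k x * (qfun a k x * qfun a k x)))) = fun x =>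
      u x * (qfun a k x * qfun a k x * 3 * pd3 i (pd3 j (qfun a k)) x) +
      u x * (qfun a k x * pd3 i (qfun a k) x * pd3 j (qfun a k) x * 6) +
      pd3 i u x * (qfun a k x * qfun a k x * 3 * pd3 j (qfun a k) x) +
      pd3 j u x * (qfun a k x * qfun a k x * 3 * pd3 i (qfun a k) x) +
      qfun a k x * (qfun a k x * qfun a k x) * pd3 i (pd3 j u) x := by
  have hq2 : ContDiff ℝ 2 (qfun a k) := qfun_contDiff ha
  have dq : Differentiable ℝ (qfun a k) := hq2.differentiable (by norm_num)
  have du : Differentiable ℝ u := hu.differentiable (by norm_num)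
  have dpdq : Differentiable ℝ (pd3 j (qfun a k)) :=
    (pd3_contDiff1 (n := 1) (by exact_mod_cast hq2) j).differentiable (by norm_num)
  have dpdu : Differentiable ℝ (pd3 j u) :=
    (pd3_contDiff1 (n := 1) (by exact_mod_cast hu) j).differentiable (by norm_num)
  rw [hh1 hu ha j,
    pd3_add (du.fun_mul (((dq.fun_mul dq).fun_mul (differentiable_const 3)).fun_mul dpdq))
      ((dq.fun_mul (dq.fun_mul dq)).fun_mul dpdu) i,
    pd3_mul du (((dq.fun_mul dq).fun_mul (differentiable_const 3)).fun_mul dpdq) i,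
    pd3_mul ((dq.fun_mul dq).fun_mul (differentiable_const 3)) dpdq i,
    pd3_mul_const (dq.fun_mul dq) i,
    pd3_mul dq dq i,
    pd3_mul (dq.fun_mul (dq.fun_mul dq)) dpdu i,
    pd3_mul dq (dq.fun_mul dq) i, pd3_mul dq dq i]
  funext x
  ring

end deriv2

lemma pdList_nil (f : (Fin 3 → ℝ) → ℝ) : pdList [] f = f := rfl

lemma pdList_one (i : Fin 3) (f : (Fin 3 → ℝ) → ℝ) : pdList [i] f = pd3 i f := rfl

lemma pdList_two (i j : Fin 3) (f : (Fin 3 → ℝ) → ℝ) :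
    pdList [i, j] f = pd3 i (pd3 j f) := rfl

lemma abs_mul_le {a b A B : ℝ} (ha : |a| ≤ A) (hb : |b| ≤ B) : |a * b| ≤ A * B := by
  rw [abs_mul]
  exact mul_le_mul ha hb (abs_nonneg _) ((abs_nonneg a).trans ha)

lemma arith1 (κ S0 Si E Mv : ℝ) (hκ : 0 < κ) (h0 : 0 ≤ S0) (hi : 0 ≤ Si) (hM : 0 ≤ Mv)
    (hA : S0 / κ ≤ E) (hB : Si ≤ E) :
    S0 * (1 * 1 * 3 * ((2 + Mv) * (6 * κ)⁻¹)) + 1 * Si ≤ 4 * (2 + Mv) ^ 2 * E := by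
  have hE : 0 ≤ E := hi.trans hB
  have key : S0 * (1 * 1 * 3 * ((2 + Mv) * (6 * κ)⁻¹)) = (2 + Mv) / 2 * (S0 / κ) := by
    field_simp
    ring
  rw [key]
  have h1 : (2 + Mv) / 2 * (S0 / κ) ≤ (2 + Mv) / 2 * E := by
    apply mul_le_mul_of_nonneg_left hA
    linarith
  nlinarith [mul_nonneg hE hM, mul_nonneg (mul_nonneg hE hM) hM]


lemma arith2 (κ S0 Si Sj Sij E Mv : ℝ) (hκ : 0 < κ) (hκ1 : κ ≤ 1) (hM : 0 ≤ Mv)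
    (h0 : 0 ≤ S0) (hi : 0 ≤ Si) (hj : 0 ≤ Sj) (hij : 0 ≤ Sij) (hS0κ : S0 ≤ κ)
    (hA : S0 / κ ^ 2 ≤ E) (hB : Si / κ ≤ E) (hB' : Sj / κ ≤ E) (hD : Sij ≤ E) :
    S0 * (1 * 1 * 3 * ((Mv + Sij) * (6 * κ)⁻¹)) +
    S0 * (1 * ((2 + Mv) * (6 * κ)⁻¹) * ((2 + Mv) * (6 * κ)⁻¹) * 6) +
    Si * (1 * 1 * 3 * ((2 + Mv) * (6 * κ)⁻¹)) +
    Sj * (1 * 1 * 3 * ((2 + Mv) * (6 * κ)⁻¹)) +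
    1 * (1 * 1) * Sij ≤ 4 * (2 + Mv) ^ 2 * E := by
  have hE : 0 ≤ E := hij.trans hD
  have hκ2 : (0:ℝ) < κ ^ 2 := by positivity
  have hS0κ2 : S0 / κ ≤ E := by
    have : S0 / κ = S0 / κ ^ 2 * κ := by field_simp
    rw [this]
    calc S0 / κ ^ 2 * κ ≤ E * 1 := by
          apply mul_le_mul hA hκ1 hκ.le hE
      _ = E := mul_one E
  have e1 : S0 * (1 * 1 * 3 * ((Mv + Sij) * (6 * κ)⁻¹)) ≤ Mv / 2 * E + 1 / 2 * E := by
    have heq : S0 * (1 * 1 * 3 * ((Mv + Sij) * (6 * κ)⁻¹))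
        = Mv / 2 * (S0 / κ) + S0 * Sij / (2 * κ) := by
      field_simp
      ring
    rw [heq]
    have c1 : Mv / 2 * (S0 / κ) ≤ Mv / 2 * E :=
      mul_le_mul_of_nonneg_left hS0κ2 (by linarith)
    have c2 : S0 * Sij / (2 * κ) ≤ 1 / 2 * E := by
      have h1 : S0 * Sij ≤ κ * Sij := mul_le_mul_of_nonneg_right hS0κ hij
      have h2 : S0 * Sij / (2 * κ) ≤ κ * Sij / (2 * κ) := by
        exact div_le_div_of_nonneg_right h1 (by linarith)
      have h3 : κ * Sij / (2 * κ) = Sij / 2 := by field_simp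
      calc S0 * Sij / (2 * κ) ≤ κ * Sij / (2 * κ) := h2
        _ = Sij / 2 := h3
        _ ≤ 1 / 2 * E := by linarith
    linarith
  have e2 : S0 * (1 * ((2 + Mv) * (6 * κ)⁻¹) * ((2 + Mv) * (6 * κ)⁻¹) * 6) ≤
      (2 + Mv) ^ 2 / 6 * E := by
    have heq : S0 * (1 * ((2 + Mv) * (6 * κ)⁻¹) * ((2 + Mv) * (6 * κ)⁻¹) * 6)
        = (2 + Mv) ^ 2 / 6 * (S0 / κ ^ 2) := by
      field_simp
    rw [heq]
    apply mul_le_mul_of_nonneg_left hA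
    positivity
  have e3 : Si * (1 * 1 * 3 * ((2 + Mv) * (6 * κ)⁻¹)) ≤ (2 + Mv) / 2 * E := by
    have heq : Si * (1 * 1 * 3 * ((2 + Mv) * (6 * κ)⁻¹)) = (2 + Mv) / 2 * (Si / κ) := by
      field_simp
      ring
    rw [heq]
    apply mul_le_mul_of_nonneg_left hB
    linarith
  have e4 : Sj * (1 * 1 * 3 * ((2 + Mv) * (6 * κ)⁻¹)) ≤ (2 + Mv) / 2 * E := by
    have heq : Sj * (1 * 1 * 3 * ((2 + Mv) * (6 * κ)⁻¹)) = (2 + Mv) / 2 * (Sj / κ) := by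
      field_simp
      ring
    rw [heq]
    apply mul_le_mul_of_nonneg_left hB'
    linarith
  have e5 : 1 * (1 * 1) * Sij ≤ E := by linarith
  nlinarith [mul_nonneg hE hM, mul_nonneg (mul_nonneg hE hM) hM]


set_option maxHeartbeats 1000000 in
/-- Leibniz-rule estimates for the profile functions
`h_ε(x̄, x₃) = (g_ε(x̄) - g(x̄)) ((x₃ - ĝ_ε(x̄))/(6κ_ε))³`, `ĝ_ε = g_ε - 6κ_ε`, under the
convergence assumptions `κ_ε → 0`, `κ_ε > ‖g_ε - g‖_∞` and
`‖D^β(g_ε - g)‖_∞ / κ_ε^{3/2 - |β|} → 0` for `|β| ≤ 2`:  every derivative `D^α h_ε` of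
order `|α| ≤ 2` is bounded on the strip by
`c Σ_{γ ≤ α} ‖D^γ(g_ε - g)‖_∞ / κ_ε^{|α|-|γ|}` with `c` independent of `ε`; in
particular every second-order derivative of `h_ε` is `o(κ_ε^{-1/2})` as `ε → 0`. -/
theorem stmt15 (W : Set (Fin 2 → ℝ)) (hWo : IsOpen W) (hWb : Bornology.IsBounded W)
    (g : (Fin 2 → ℝ) → ℝ) (gε : ℝ → (Fin 2 → ℝ) → ℝ) (κ : ℝ → ℝ)
    (hg : ContDiff ℝ 2 g) (hgε : ∀ ε > (0:ℝ), ContDiff ℝ 2 (gε ε))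
    (hκpos : ∀ ε > (0:ℝ), 0 < κ ε)
    (hκ0 : Tendsto κ (nhdsWithin 0 (Set.Ioi 0)) (nhds 0))
    (hκgt : ∀ ε > (0:ℝ), ∀ p ∈ W, |gε ε p - g p| < κ ε)
    (hrat : ∀ L : List (Fin 3), L.length ≤ 2 →
      Tendsto (fun ε =>
          (⨆ p : W, |pdList L (fun x => gε ε (proj2 x) - g (proj2 x)) (lift2 p)|) /
            κ ε ^ ((3:ℝ) / 2 - L.length))
        (nhdsWithin 0 (Set.Ioi 0)) (nhds 0))
    (h : ℝ → (Fin 3 → ℝ) → ℝ)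
    (hdef : ∀ ε > (0:ℝ), ∀ x : Fin 3 → ℝ,
      h ε x = (gε ε (proj2 x) - g (proj2 x)) *
        ((x 2 - (gε ε (proj2 x) - 6 * κ ε)) / (6 * κ ε)) ^ 3) :
    (∃ c : ℝ, 0 < c ∧ ∃ ε₁ : ℝ, 0 < ε₁ ∧ ∀ ε : ℝ, 0 < ε → ε < ε₁ →
      ∀ L : List (Fin 3), L.length ≤ 2 →
        ∀ x : Fin 3 → ℝ, proj2 x ∈ W →
          gε ε (proj2 x) - 6 * κ ε < x 2 → x 2 < gε ε (proj2 x) →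
          |pdList L (h ε) x| ≤
            c * ∑ L' ∈ L.sublists.toFinset,
              (⨆ p : W, |pdList L' (fun y => gε ε (proj2 y) - g (proj2 y)) (lift2 p)|) /
                κ ε ^ (L.length - L'.length)) ∧
      ∀ L : List (Fin 3), L.length = 2 →
        Tendsto (fun ε => Real.sqrt (κ ε) *
            ⨆ x : {y : Fin 3 → ℝ // proj2 y ∈ W ∧
                gε ε (proj2 y) - 6 * κ ε < y 2 ∧ y 2 < gε ε (proj2 y)},
              |pdList L (h ε) x|)
          (nhdsWithin 0 (Set.Ioi 0)) (nhds 0) := by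
  classical
  -- the supremum quantities
  set S : ℝ → List (Fin 3) → ℝ := fun ε L' =>
    ⨆ p : W, |pdList L' (fun y => gε ε (proj2 y) - g (proj2 y)) (lift2 p)| with hS
  -- uniform bound for the derivatives of g on W
  choose C1 hC10 hC1 using fun i : Fin 3 =>
    cyl_bound (W := W) hWb [i] (by norm_num) g hg
  choose C2 hC20 hC2 using fun ij : Fin 3 × Fin 3 =>
    cyl_bound (W := W) hWb [ij.1, ij.2] (by norm_num) g hg
  set M : ℝ := (∑ i : Fin 3, C1 i) + ∑ ij : Fin 3 × Fin 3, C2 ij with hMdef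
  have hM0 : 0 ≤ M := by
    exact add_nonneg (Finset.sum_nonneg fun i _ => hC10 i)
      (Finset.sum_nonneg fun ij _ => hC20 ij)
  have hM1 : ∀ (i : Fin 3) (x : Fin 3 → ℝ), proj2 x ∈ W →
      |pd3 i (fun x => g (proj2 x)) x| ≤ M := by
    intro i x hx
    refine (hC1 i x hx).trans ?_
    have h1 : C1 i ≤ ∑ i : Fin 3, C1 i :=
      Finset.single_le_sum (fun j _ => hC10 j) (Finset.mem_univ i)
    have h2 : 0 ≤ ∑ ij : Fin 3 × Fin 3, C2 ij := Finset.sum_nonneg fun j _ => hC20 j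
    linarith
  have hM2 : ∀ (i j : Fin 3) (x : Fin 3 → ℝ), proj2 x ∈ W →
      |pd3 i (pd3 j (fun x => g (proj2 x))) x| ≤ M := by
    intro i j x hx
    refine (hC2 (i, j) x hx).trans ?_
    have h1 : C2 (i, j) ≤ ∑ ij : Fin 3 × Fin 3, C2 ij :=
      Finset.single_le_sum (fun j _ => hC20 j) (Finset.mem_univ (i, j))
    have h2 : 0 ≤ ∑ i : Fin 3, C1 i := Finset.sum_nonneg fun j _ => hC10 j
    linarith
  -- eventual smallness conditions
  have hev : ∀ᶠ ε in nhdsWithin 0 (Set.Ioi 0),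
      κ ε < 1 ∧ ∀ i : Fin 3, S ε [i] / κ ε ^ ((3:ℝ)/2 - ([i] : List (Fin 3)).length) < 1 := by
    have h1 : ∀ᶠ ε in nhdsWithin 0 (Set.Ioi 0), κ ε < 1 :=
      hκ0.eventually_lt_const (by norm_num)
    have h2 : ∀ᶠ ε in nhdsWithin 0 (Set.Ioi 0),
        ∀ i : Fin 3, S ε [i] / κ ε ^ ((3:ℝ)/2 - ([i] : List (Fin 3)).length) < 1 := by
      rw [eventually_all]
      intro i
      exact (hrat [i] (by norm_num)).eventually_lt_const (by norm_num)
    exact h1.and h2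
  rw [Filter.Eventually, Metric.mem_nhdsWithin_iff] at hev
  obtain ⟨ε₁, hε₁, hsub⟩ := hev
  -- the constant
  have key : ∀ ε : ℝ, 0 < ε → ε < ε₁ →
      ∀ L : List (Fin 3), L.length ≤ 2 →
        ∀ x : Fin 3 → ℝ, proj2 x ∈ W →
          gε ε (proj2 x) - 6 * κ ε < x 2 → x 2 < gε ε (proj2 x) →
          |pdList L (h ε) x| ≤
            4 * (2 + M)^2 * ∑ L' ∈ L.sublists.toFinset, S ε L' / κ ε ^ (L.length - L'.length) := by
    intro ε hε0 hεε₁ L hL x hxW hx1 hx2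
    have hεmem : ε ∈ Metric.ball (0:ℝ) ε₁ ∩ Set.Ioi 0 := by
      constructor
      · rw [Metric.mem_ball, Real.dist_eq, sub_zero, abs_of_pos hε0]
        exact hεε₁
      · exact hε0
    obtain ⟨hκ1, hSi1⟩ := hsub hεmem
    have hκp : 0 < κ ε := hκpos ε hε0
    have hk : 0 < 6 * κ ε := by linarith
    -- S ε [i] ≤ 1
    have hS1 : ∀ i : Fin 3, S ε [i] ≤ 1 := by
      intro i
      have hp : (0:ℝ) < κ ε ^ ((3:ℝ)/2 - ([i] : List (Fin 3)).length) :=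
        Real.rpow_pos_of_pos hκp _
      have := (div_lt_one hp).mp (hSi1 i)
      have hle1 : κ ε ^ ((3:ℝ)/2 - ([i] : List (Fin 3)).length) ≤ 1 :=
        Real.rpow_le_one hκp.le hκ1.le (by norm_num)
      linarith
    -- nonnegativity and sup bounds
    have hsup : ∀ L' : List (Fin 3), L'.length ≤ 2 → 0 ≤ S ε L' ∧
        ∀ y : Fin 3 → ℝ, proj2 y ∈ W →
          |pdList L' (fun z => gε ε (proj2 z) - g (proj2 z)) y| ≤ S ε L' :=
      fun L' hL' => cyl_le_sup (W := W) hWb L' hL' (fun p => gε ε p - g p)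
        ((hgε ε hε0).sub hg)
    -- S ε [] ≤ κ ε
    have hS0κ : S ε [] ≤ κ ε := by
      refine Real.iSup_le (fun p => ?_) hκp.le
      show |pdList [] (fun y => gε ε (proj2 y) - g (proj2 y)) (lift2 p)| ≤ κ ε
      show |gε ε (proj2 (lift2 p)) - g (proj2 (lift2 p))| ≤ κ ε
      rw [proj2_lift2]
      exact (hκgt ε hε0 p p.2).le
    -- local functions
    have hgεc : ContDiff ℝ 2 (gε ε) := hgε ε hε0
    set k := 6 * κ ε with hkdef
    set uf : (Fin 3 → ℝ) → ℝ := fun z => gε ε (proj2 z) - g (proj2 z) with hufdef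
    set af : (Fin 3 → ℝ) → ℝ := fun z => gε ε (proj2 z) with hafdef
    have hu2 : ContDiff ℝ 2 uf := (hgεc.sub hg).comp P2.contDiff
    have ha2 : ContDiff ℝ 2 af := hgεc.comp P2.contDiff
    have hGf2 : ContDiff ℝ 2 (fun z : Fin 3 → ℝ => g (proj2 z)) := hg.comp P2.contDiff
    have hfun : h ε = fun z => uf z * (qfun af k z * (qfun af k z * qfun af k z)) := by
      funext z
      rw [hdef ε hε0 z]
      simp only [hufdef, hafdef, hkdef, qfun]
      ring
    have hax : af x = gε ε (proj2 x) := rfl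
    have hqx0 : 0 ≤ qfun af k x := by
      have h1 : (0:ℝ) ≤ x 2 - (af x - k) := by
        rw [hax, hkdef]
        linarith
      exact div_nonneg h1 hk.le
    have hqx1 : qfun af k x ≤ 1 := by
      rw [show qfun af k x = (x 2 - (af x - k)) / k from rfl, div_le_one hk, hax, hkdef]
      linarith
    have hqabs : |qfun af k x| ≤ 1 := by
      rw [abs_of_nonneg hqx0]
      exact hqx1
    have hu0 : |uf x| ≤ S ε [] := (hsup [] (by norm_num)).2 x hxW
    have hu1 : ∀ i : Fin 3, |pd3 i uf x| ≤ S ε [i] :=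
      fun i => (hsup [i] (by norm_num)).2 x hxW
    have hu2b : ∀ i j : Fin 3, |pd3 i (pd3 j uf) x| ≤ S ε [i, j] :=
      fun i j => (hsup [i, j] (by norm_num)).2 x hxW
    have hSnn : ∀ L' : List (Fin 3), L'.length ≤ 2 → 0 ≤ S ε L' := fun L' hl => (hsup L' hl).1
    have hafsplit : af = fun z => (fun w : Fin 3 → ℝ => g (proj2 w)) z + uf z := by
      funext z
      show gε ε (proj2 z) = g (proj2 z) + (gε ε (proj2 z) - g (proj2 z))
      ring
    have hdGf : Differentiable ℝ (fun w : Fin 3 → ℝ => g (proj2 w)) :=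
      hGf2.differentiable (by norm_num)
    have hduf : Differentiable ℝ uf := hu2.differentiable (by norm_num)
    have hpda : ∀ i : Fin 3, pd3 i af =
        fun z => pd3 i (fun w : Fin 3 → ℝ => g (proj2 w)) z + pd3 i uf z := by
      intro i
      rw [hafsplit]
      exact pd3_add hdGf hduf i
    have ha1b : ∀ i : Fin 3, |pd3 i af x| ≤ 1 + M := by
      intro i
      simp only [hpda i]
      calc |pd3 i (fun w : Fin 3 → ℝ => g (proj2 w)) x + pd3 i uf x|
          ≤ |pd3 i (fun w : Fin 3 → ℝ => g (proj2 w)) x| + |pd3 i uf x| := abs_add_le _ _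
        _ ≤ M + 1 := add_le_add (hM1 i x hxW) ((hu1 i).trans (hS1 i))
        _ = 1 + M := by ring
    have ha2b : ∀ i j : Fin 3, |pd3 i (pd3 j af) x| ≤ M + S ε [i, j] := by
      intro i j
      have hdG1 : Differentiable ℝ (pd3 j (fun w : Fin 3 → ℝ => g (proj2 w))) :=
        (pd3_contDiff1 (n := 1) (by exact_mod_cast hGf2) j).differentiable (by norm_num)
      have hdu1 : Differentiable ℝ (pd3 j uf) :=
        (pd3_contDiff1 (n := 1) (by exact_mod_cast hu2) j).differentiable (by norm_num)
      have heq : pd3 i (pd3 j af) =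
          fun z => pd3 i (pd3 j (fun w : Fin 3 → ℝ => g (proj2 w))) z + pd3 i (pd3 j uf) z := by
        rw [hpda j]
        exact pd3_add hdG1 hdu1 i
      simp only [heq]
      calc |pd3 i (pd3 j (fun w : Fin 3 → ℝ => g (proj2 w))) x + pd3 i (pd3 j uf) x|
          ≤ |pd3 i (pd3 j (fun w : Fin 3 → ℝ => g (proj2 w))) x| + |pd3 i (pd3 j uf) x| :=
            abs_add_le _ _
        _ ≤ M + S ε [i, j] := add_le_add (hM2 i j x hxW) (hu2b i j)
    have hqd1 : ∀ i : Fin 3, |pd3 i (qfun af k) x| ≤ (2 + M) * k⁻¹ := by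
      intro i
      simp only [pd3_qfun ha2 i]
      rw [abs_mul, abs_inv, abs_of_pos hk]
      refine mul_le_mul_of_nonneg_right ?_ (inv_nonneg.mpr hk.le)
      calc |(if i = 2 then (1:ℝ) else 0) - pd3 i af x|
          ≤ |(if i = 2 then (1:ℝ) else 0)| + |pd3 i af x| := abs_sub _ _
        _ ≤ 1 + (1 + M) := add_le_add (by split <;> norm_num) (ha1b i)
        _ = 2 + M := by ring
    have hqd2 : ∀ i j : Fin 3, |pd3 i (pd3 j (qfun af k)) x| ≤ (M + S ε [i, j]) * k⁻¹ := by
      intro i j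
      simp only [pd3_pd3_qfun ha2 i j]
      rw [abs_mul, abs_inv, abs_of_pos hk, abs_neg]
      exact mul_le_mul_of_nonneg_right (ha2b i j) (inv_nonneg.mpr hk.le)
    -- case analysis on the multi-index
    rcases L with _ | ⟨i, _ | ⟨j, _ | ⟨m, t⟩⟩⟩
    · -- L = []
      have hsum : (∑ L' ∈ ([] : List (Fin 3)).sublists.toFinset,
          S ε L' / κ ε ^ (([] : List (Fin 3)).length - L'.length)) = S ε [] := by
        simp
      rw [hsum, pdList_nil, hfun]
      have hb := abs_mul_le hu0 (abs_mul_le hqabs (abs_mul_le hqabs hqabs))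
      have hS0 : 0 ≤ S ε [] := hSnn [] (by norm_num)
      nlinarith [mul_nonneg hS0 hM0, mul_nonneg (mul_nonneg hS0 hM0) hM0]
    · -- L = [i]
      have tn : ∀ L' ∈ ([i] : List (Fin 3)).sublists.toFinset,
          0 ≤ S ε L' / κ ε ^ (([i] : List (Fin 3)).length - L'.length) := by
        intro L' hmem
        have hlen := (List.mem_sublists.mp (List.mem_toFinset.mp hmem)).length_le
        exact div_nonneg (hSnn L' (hlen.trans (by norm_num))) (pow_nonneg hκp.le _)
      have hm0 : ([] : List (Fin 3)) ∈ ([i] : List (Fin 3)).sublists.toFinset := by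
        rw [List.mem_toFinset, List.mem_sublists]
        exact List.nil_sublist _
      have hm1 : ([i] : List (Fin 3)) ∈ ([i] : List (Fin 3)).sublists.toFinset := by
        rw [List.mem_toFinset, List.mem_sublists]
      have hA : S ε [] / κ ε ≤ ∑ L' ∈ ([i] : List (Fin 3)).sublists.toFinset,
          S ε L' / κ ε ^ (([i] : List (Fin 3)).length - L'.length) := by
        simpa using Finset.single_le_sum tn hm0
      have hB : S ε [i] ≤ ∑ L' ∈ ([i] : List (Fin 3)).sublists.toFinset,
          S ε L' / κ ε ^ (([i] : List (Fin 3)).length - L'.length) := by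
        simpa using Finset.single_le_sum tn hm1
      rw [pdList_one, hfun]
      simp only [hh1 hu2 ha2 i]
      have hb1 : |uf x * (qfun af k x * qfun af k x * 3 * pd3 i (qfun af k) x)| ≤
          S ε [] * (1 * 1 * 3 * ((2 + M) * k⁻¹)) :=
        abs_mul_le hu0 (abs_mul_le (abs_mul_le (abs_mul_le hqabs hqabs)
          (by norm_num : |(3:ℝ)| ≤ 3)) (hqd1 i))
      have hb2 : |qfun af k x * (qfun af k x * qfun af k x) * pd3 i uf x| ≤
          1 * (1 * 1) * S ε [i] :=
        abs_mul_le (abs_mul_le hqabs (abs_mul_le hqabs hqabs)) (hu1 i)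
      have htot := (abs_add_le _ _).trans (add_le_add hb1 hb2)
      rw [hkdef] at htot
      have har := arith1 (κ ε) (S ε []) (S ε [i]) _ M hκp (hSnn [] (by norm_num))
        (hSnn [i] (by norm_num)) hM0 hA hB
      linarith
    · -- L = [i, j]
      have tn : ∀ L' ∈ ([i, j] : List (Fin 3)).sublists.toFinset,
          0 ≤ S ε L' / κ ε ^ (([i, j] : List (Fin 3)).length - L'.length) := by
        intro L' hmem
        have hlen := (List.mem_sublists.mp (List.mem_toFinset.mp hmem)).length_le
        exact div_nonneg (hSnn L' (hlen.trans (by norm_num))) (pow_nonneg hκp.le _)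
      have hm0 : ([] : List (Fin 3)) ∈ ([i, j] : List (Fin 3)).sublists.toFinset := by
        rw [List.mem_toFinset, List.mem_sublists]
        exact List.nil_sublist _
      have hmi : ([i] : List (Fin 3)) ∈ ([i, j] : List (Fin 3)).sublists.toFinset := by
        rw [List.mem_toFinset, List.mem_sublists]
        exact (List.nil_sublist [j]).cons₂ i
      have hmj : ([j] : List (Fin 3)) ∈ ([i, j] : List (Fin 3)).sublists.toFinset := by
        rw [List.mem_toFinset, List.mem_sublists]
        exact (List.Sublist.refl [j]).cons i
      have hmij : ([i, j] : List (Fin 3)) ∈ ([i, j] : List (Fin 3)).sublists.toFinset := by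
        rw [List.mem_toFinset, List.mem_sublists]
      have hA : S ε [] / κ ε ^ 2 ≤ ∑ L' ∈ ([i, j] : List (Fin 3)).sublists.toFinset,
          S ε L' / κ ε ^ (([i, j] : List (Fin 3)).length - L'.length) := by
        simpa using Finset.single_le_sum tn hm0
      have hB : S ε [i] / κ ε ≤ ∑ L' ∈ ([i, j] : List (Fin 3)).sublists.toFinset,
          S ε L' / κ ε ^ (([i, j] : List (Fin 3)).length - L'.length) := by
        simpa using Finset.single_le_sum tn hmi
      have hB' : S ε [j] / κ ε ≤ ∑ L' ∈ ([i, j] : List (Fin 3)).sublists.toFinset,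
          S ε L' / κ ε ^ (([i, j] : List (Fin 3)).length - L'.length) := by
        simpa using Finset.single_le_sum tn hmj
      have hD : S ε [i, j] ≤ ∑ L' ∈ ([i, j] : List (Fin 3)).sublists.toFinset,
          S ε L' / κ ε ^ (([i, j] : List (Fin 3)).length - L'.length) := by
        simpa using Finset.single_le_sum tn hmij
      rw [pdList_two, hfun]
      simp only [hh2 hu2 ha2 i j]
      have hb1 : |uf x * (qfun af k x * qfun af k x * 3 * pd3 i (pd3 j (qfun af k)) x)| ≤
          S ε [] * (1 * 1 * 3 * ((M + S ε [i, j]) * k⁻¹)) :=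
        abs_mul_le hu0 (abs_mul_le (abs_mul_le (abs_mul_le hqabs hqabs)
          (by norm_num : |(3:ℝ)| ≤ 3)) (hqd2 i j))
      have hb2 : |uf x * (qfun af k x * pd3 i (qfun af k) x * pd3 j (qfun af k) x * 6)| ≤
          S ε [] * (1 * ((2 + M) * k⁻¹) * ((2 + M) * k⁻¹) * 6) :=
        abs_mul_le hu0 (abs_mul_le (abs_mul_le (abs_mul_le hqabs (hqd1 i)) (hqd1 j))
          (by norm_num : |(6:ℝ)| ≤ 6))
      have hb3 : |pd3 i uf x * (qfun af k x * qfun af k x * 3 * pd3 j (qfun af k) x)| ≤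
          S ε [i] * (1 * 1 * 3 * ((2 + M) * k⁻¹)) :=
        abs_mul_le (hu1 i) (abs_mul_le (abs_mul_le (abs_mul_le hqabs hqabs)
          (by norm_num : |(3:ℝ)| ≤ 3)) (hqd1 j))
      have hb4 : |pd3 j uf x * (qfun af k x * qfun af k x * 3 * pd3 i (qfun af k) x)| ≤
          S ε [j] * (1 * 1 * 3 * ((2 + M) * k⁻¹)) :=
        abs_mul_le (hu1 j) (abs_mul_le (abs_mul_le (abs_mul_le hqabs hqabs)
          (by norm_num : |(3:ℝ)| ≤ 3)) (hqd1 i))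
      have hb5 : |qfun af k x * (qfun af k x * qfun af k x) * pd3 i (pd3 j uf) x| ≤
          1 * (1 * 1) * S ε [i, j] :=
        abs_mul_le (abs_mul_le hqabs (abs_mul_le hqabs hqabs)) (hu2b i j)
      have htot := (abs_add_le _ _).trans (add_le_add ((abs_add_le _ _).trans (add_le_add
        ((abs_add_le _ _).trans (add_le_add ((abs_add_le _ _).trans (add_le_add hb1 hb2)) hb3))
        hb4)) hb5)
      rw [hkdef] at htot
      have har := arith2 (κ ε) (S ε []) (S ε [i]) (S ε [j]) (S ε [i, j]) _ M hκp hκ1.le hM0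
        (hSnn [] (by norm_num)) (hSnn [i] (by norm_num)) (hSnn [j] (by norm_num))
        (hSnn [i, j] (by norm_num)) hS0κ hA hB hB' hD
      linarith
    · -- length ≥ 3 : contradiction
      exfalso
      simp only [List.length_cons] at hL
      omega

  refine ⟨⟨4 * (2 + M)^2, by positivity, ε₁, hε₁, key⟩, ?_⟩
  -- part 2: second derivatives are o(κ^{-1/2})
  intro L hL2
  rcases L with _ | ⟨i, _ | ⟨j, _ | ⟨m, t⟩⟩⟩
  · simp at hL2
  · simp at hL2
  case cons.cons.cons => simp only [List.length_cons] at hL2; omega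
  have hfs : ∀ L' ∈ ([i, j] : List (Fin 3)).sublists.toFinset, L'.length ≤ 2 := by
    intro L' hmem
    have hlen := (List.mem_sublists.mp (List.mem_toFinset.mp hmem)).length_le
    exact hlen.trans (by norm_num)
  -- the upper comparison function tends to 0
  have hU : Tendsto (fun ε => 4 * (2 + M) ^ 2 *
      ∑ L' ∈ ([i, j] : List (Fin 3)).sublists.toFinset,
        S ε L' / κ ε ^ ((3:ℝ) / 2 - L'.length))
      (nhdsWithin 0 (Set.Ioi 0)) (nhds 0) := by
    have hsum : Tendsto (fun ε => ∑ L' ∈ ([i, j] : List (Fin 3)).sublists.toFinset,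
        S ε L' / κ ε ^ ((3:ℝ) / 2 - L'.length)) (nhdsWithin 0 (Set.Ioi 0)) (nhds 0) := by
      have := tendsto_finset_sum (([i, j] : List (Fin 3)).sublists.toFinset)
        (fun L' hmem => hrat L' (hfs L' hmem))
      simpa using this
    have := hsum.const_mul (4 * (2 + M) ^ 2)
    simpa using this
  refine tendsto_of_tendsto_of_tendsto_of_le_of_le' tendsto_const_nhds hU ?_ ?_
  · filter_upwards with ε
    exact mul_nonneg (Real.sqrt_nonneg _) (Real.iSup_nonneg fun y => abs_nonneg _)
  · have hball : Metric.ball (0:ℝ) ε₁ ∈ nhdsWithin (0:ℝ) (Set.Ioi 0) :=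
      mem_nhdsWithin_of_mem_nhds (Metric.ball_mem_nhds 0 hε₁)
    filter_upwards [hball, self_mem_nhdsWithin] with ε hεb hεI
    have hε0 : 0 < ε := hεI
    have hεε₁ : ε < ε₁ := by
      rw [Metric.mem_ball, Real.dist_eq, sub_zero, abs_of_pos hε0] at hεb
      exact hεb
    have hκp : 0 < κ ε := hκpos ε hε0
    have hSnn : ∀ L' : List (Fin 3), L'.length ≤ 2 → 0 ≤ S ε L' :=
      fun L' hl => (cyl_le_sup (W := W) hWb L' hl (fun p => gε ε p - g p)
        ((hgε ε hε0).sub hg)).1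
    set Sig2 : ℝ := ∑ L' ∈ ([i, j] : List (Fin 3)).sublists.toFinset,
        S ε L' / κ ε ^ (([i, j] : List (Fin 3)).length - L'.length) with hSig2
    have hSig2nn : 0 ≤ Sig2 := by
      refine Finset.sum_nonneg fun L' hmem => ?_
      exact div_nonneg (hSnn L' (hfs L' hmem)) (pow_nonneg hκp.le _)
    have hsupb : (⨆ y : {y : Fin 3 → ℝ // proj2 y ∈ W ∧
        gε ε (proj2 y) - 6 * κ ε < y 2 ∧ y 2 < gε ε (proj2 y)},
          |pdList [i, j] (h ε) y|) ≤ 4 * (2 + M) ^ 2 * Sig2 := by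
      refine Real.iSup_le (fun y => ?_) (mul_nonneg (by positivity) hSig2nn)
      exact key ε hε0 hεε₁ [i, j] (by norm_num) y y.2.1 y.2.2.1 y.2.2.2
    have hmul : Real.sqrt (κ ε) * (⨆ y : {y : Fin 3 → ℝ // proj2 y ∈ W ∧
        gε ε (proj2 y) - 6 * κ ε < y 2 ∧ y 2 < gε ε (proj2 y)},
          |pdList [i, j] (h ε) y|) ≤ Real.sqrt (κ ε) * (4 * (2 + M) ^ 2 * Sig2) :=
      mul_le_mul_of_nonneg_left hsupb (Real.sqrt_nonneg _)
    refine hmul.trans (le_of_eq ?_)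
    have hterm : ∀ L' ∈ ([i, j] : List (Fin 3)).sublists.toFinset,
        Real.sqrt (κ ε) * (S ε L' / κ ε ^ (([i, j] : List (Fin 3)).length - L'.length)) =
          S ε L' / κ ε ^ ((3:ℝ) / 2 - L'.length) := by
      intro L' hmem
      have hlen : L'.length ≤ 2 := hfs L' hmem
      have hc : (((2 - L'.length : ℕ)) : ℝ) = 2 - (L'.length : ℝ) := by
        push_cast [Nat.cast_sub hlen]
        ring
      show Real.sqrt (κ ε) * (S ε L' / κ ε ^ (2 - L'.length)) = _
      rw [div_eq_mul_inv, div_eq_mul_inv, Real.sqrt_eq_rpow,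
        ← Real.rpow_natCast (κ ε) (2 - L'.length), hc,
        ← Real.rpow_neg hκp.le, ← Real.rpow_neg hκp.le,
        mul_comm, mul_assoc, ← Real.rpow_add hκp]
      congr 1
      ring
    have e1 : Real.sqrt (κ ε) * (4 * (2 + M) ^ 2 * Sig2) =
        4 * (2 + M) ^ 2 * (Real.sqrt (κ ε) * Sig2) := by ring
    have e2 : Real.sqrt (κ ε) * Sig2 =
        ∑ L' ∈ ([i, j] : List (Fin 3)).sublists.toFinset,
          Real.sqrt (κ ε) * (S ε L' / κ ε ^ (([i, j] : List (Fin 3)).length - L'.length)) := by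
      rw [hSig2]
      exact Finset.mul_sum _ _ _
    rw [e1, e2, Finset.sum_congr rfl hterm]
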